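/- Let G be a finite simple block graph and let P_1,…,P_ℓ be vertex-disjoint induced paths of G. If P_ind contains an internal fork or a double fork as a subgraph, then P_ind contains an internal strand, an internal fork, or a double fork that is edge-disjoint from P̲ = P_1 ∪ … ∪ P_ℓ. -/

import Mathlib

open SimpleGraph

/-- An induced path in a simple graph `G`: a walk which is a path and such that the
subgraph of `G` induced on its vertex set equals the path. -/
structure InducedPath {V : Type*} (G : SimpleGraph V) where
  first : V
  last : V
  walk : G.Walk first last
  isPath : walk.IsPath
  induced : ∀ x ∈ walk.support, ∀ y ∈ walk.support, G.Adj x y → s(x, y) ∈ walk.edges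

namespace InducedPath

variable {V : Type*} {G : SimpleGraph V}

/-- The vertex set of an induced path. -/
def vertexSet (P : InducedPath G) : Set V := {v | v ∈ P.walk.support}

/-- The edge set of an induced path. -/
def edgeSet (P : InducedPath G) : Set (Sym2 V) := {e | e ∈ P.walk.edges}

/-- The terminal vertices `∂P` of an induced path. -/
def boundary (P : InducedPath G) : Set V := {P.first, P.last}

/-- The internal vertices `P°` of an induced path. -/
def interior (P : InducedPath G) : Set V := P.vertexSet \ P.boundary

end InducedPath

section FamilyDefs

variable {V : Type*} (G : SimpleGraph V) {ℓ : ℕ}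

/-- `Q` contains `P` as a subgraph. -/
def PathContains (Q P : InducedPath G) : Prop :=
  P.vertexSet ⊆ Q.vertexSet ∧ P.edgeSet ⊆ Q.edgeSet

/-- The vertex set of `P_ind`, the induced subgraph on `⋃ i, V(P i)`. -/
def famVerts (P : Fin ℓ → InducedPath G) : Set V := ⋃ i, (P i).vertexSet

/-- The union of the edge sets of the paths `P i`. -/
def famEdges (P : Fin ℓ → InducedPath G) : Set (Sym2 V) := ⋃ i, (P i).edgeSet

/-- The paths `P i` are pairwise vertex-disjoint. -/
def PairwiseVertexDisjoint (P : Fin ℓ → InducedPath G) : Prop :=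
  ∀ i j : Fin ℓ, i ≠ j → Disjoint (P i).vertexSet (P j).vertexSet

/-- `φ` is an orientation of the induced path `P`, i.e. a surjection `{1,2} → ∂P`. -/
def IsOrientation (P : InducedPath G) (φ : Fin 2 → V) : Prop :=
  Set.range φ = P.boundary

/-- `Q` is an induced path of `P_ind` (equivalently, an induced path of `G` all of whose
vertices belong to `⋃ i, V(P i)`). -/
def IsPathOfInd (P : Fin ℓ → InducedPath G) (Q : InducedPath G) : Prop :=
  Q.vertexSet ⊆ famVerts G P

/-- The data `(P, σ, φ)` is DOIP. -/
def IsDOIPData (P : Fin ℓ → InducedPath G) (σ : Equiv.Perm (Fin ℓ))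
    (φ : Fin ℓ → Fin 2 → V) : Prop :=
  (∀ i, IsOrientation G (P i) (φ i)) ∧
    ∀ i j : Fin ℓ, σ i ≤ σ j → ∀ Q : InducedPath G, IsPathOfInd G P Q →
      ({Q.first, Q.last} : Set V) = {φ (σ i) 0, φ (σ j) 1} →
      ∃ k, PathContains G Q (P k)

/-- The family `P` is DOIP: there exist `σ` and orientations making it DOIP. -/
def FamilyDOIP (P : Fin ℓ → InducedPath G) : Prop :=
  ∃ (σ : Equiv.Perm (Fin ℓ)) (φ : Fin ℓ → Fin 2 → V), IsDOIPData G P σ φ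

/-- `Q` realizes an arc `(i,j)` of the directed multigraph `K_{P_ind}`. -/
def KArcWitness (P : Fin ℓ → InducedPath G) (φ : Fin ℓ → Fin 2 → V) (i j : Fin ℓ)
    (Q : InducedPath G) : Prop :=
  IsPathOfInd G P Q ∧ ({Q.first, Q.last} : Set V) = {φ i 0, φ j 1} ∧
    ∀ k, ¬ PathContains G Q (P k)

/-- `(i,j)` is an arc of `K_{P_ind}`. -/
def KArc (P : Fin ℓ → InducedPath G) (φ : Fin ℓ → Fin 2 → V) (i j : Fin ℓ) : Prop :=
  ∃ Q : InducedPath G, KArcWitness G P φ i j Q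

/-- The directed multigraph `K_{P_ind}` is directed acyclic (no loops and no directed
cycles). -/
def KAcyclic (P : Fin ℓ → InducedPath G) (φ : Fin ℓ → Fin 2 → V) : Prop :=
  ∀ i : Fin ℓ, ¬ Relation.TransGen (KArc G P φ) i i

/-- `Q` is a strand of `P_ind` from `P i` to `P j`. -/
def IsStrand (P : Fin ℓ → InducedPath G) (φ : Fin ℓ → Fin 2 → V) (i j : Fin ℓ)
    (Q : InducedPath G) : Prop :=
  i ≠ j ∧ IsPathOfInd G P Q ∧ Q.first ≠ φ i 1 ∧ Q.last ≠ φ j 0 ∧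
    Q.vertexSet ∩ (P i).vertexSet = {Q.first} ∧
    Q.vertexSet ∩ (P j).vertexSet = {Q.last} ∧
    ∀ k, ¬ PathContains G Q (P k)

/-- `Q` is an internal strand of `P_ind` from `P i` to `P j`. -/
def IsInternalStrand (P : Fin ℓ → InducedPath G) (i j : Fin ℓ) (Q : InducedPath G) : Prop :=
  i ≠ j ∧ IsPathOfInd G P Q ∧
    Q.first ∈ (P i).interior ∧ Q.last ∈ (P j).interior ∧
    Q.vertexSet ∩ (P i).vertexSet = {Q.first} ∧
    Q.vertexSet ∩ (P j).vertexSet = {Q.last} ∧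
    ∀ k, ¬ PathContains G Q (P k)

/-- `(Q, b, c)` is an internal fork of `P_ind` from `P i` to `P j`. -/
def IsInternalFork (P : Fin ℓ → InducedPath G) (i j : Fin ℓ) (Q : InducedPath G)
    (b c : V) : Prop :=
  i ≠ j ∧ IsPathOfInd G P Q ∧ Q.first ∈ (P i).interior ∧
    Q.vertexSet ∩ (P i).vertexSet = {Q.first} ∧
    Q.vertexSet ∩ (P j).vertexSet = ∅ ∧
    b ∈ (P j).vertexSet ∧ c ∈ (P j).vertexSet ∧ b ≠ c ∧
    G.Adj Q.last b ∧ G.Adj Q.last c ∧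
    ∀ k, ¬ PathContains G Q (P k)

/-- `(Q, a, b, c, d)` is a double fork of `P_ind` from `P i` to `P j`. -/
def IsDoubleFork (P : Fin ℓ → InducedPath G) (i j : Fin ℓ) (Q : InducedPath G)
    (a b c d : V) : Prop :=
  i ≠ j ∧ IsPathOfInd G P Q ∧
    Q.vertexSet ∩ (P i).vertexSet = ∅ ∧
    Q.vertexSet ∩ (P j).vertexSet = ∅ ∧
    a ∈ (P i).vertexSet ∧ b ∈ (P i).vertexSet ∧ a ≠ b ∧
    c ∈ (P j).vertexSet ∧ d ∈ (P j).vertexSet ∧ c ≠ d ∧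
    G.Adj Q.first a ∧ G.Adj Q.first b ∧ G.Adj Q.last c ∧ G.Adj Q.last d ∧
    ∀ k, ¬ PathContains G Q (P k)

/-- `(a, b, c, d)` is a complete ladder of `P_ind` between `P i` and `P j`. -/
def IsCompleteLadder (P : Fin ℓ → InducedPath G) (i j : Fin ℓ) (a b c d : V) : Prop :=
  i ≠ j ∧ a ∈ (P i).vertexSet ∧ b ∈ (P i).vertexSet ∧ a ≠ b ∧
    c ∈ (P j).vertexSet ∧ d ∈ (P j).vertexSet ∧ c ≠ d ∧
    G.Adj a b ∧ G.Adj a c ∧ G.Adj a d ∧ G.Adj b c ∧ G.Adj b d ∧ G.Adj c d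

/-- `P_ind` contains an internal strand, an internal fork, a double fork, or a
complete ladder. -/
def HasForbidden (P : Fin ℓ → InducedPath G) : Prop :=
  (∃ i j Q, IsInternalStrand G P i j Q) ∨
  (∃ i j Q b c, IsInternalFork G P i j Q b c) ∨
  (∃ i j Q a b c d, IsDoubleFork G P i j Q a b c d) ∨
  (∃ i j a b c d, IsCompleteLadder G P i j a b c d)

/-- `P_ind` contains a complete ladder, or an internal strand, internal fork, or double
fork which is edge-disjoint from the family `P`. -/
def HasForbiddenEdgeDisjoint (P : Fin ℓ → InducedPath G) : Prop :=
  (∃ i j Q, IsInternalStrand G P i j Q ∧ Disjoint Q.edgeSet (famEdges G P)) ∨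
  (∃ i j Q b c, IsInternalFork G P i j Q b c ∧
    Disjoint (Q.edgeSet ∪ {s(Q.last, b), s(Q.last, c)}) (famEdges G P)) ∨
  (∃ i j Q a b c d, IsDoubleFork G P i j Q a b c d ∧
    Disjoint (Q.edgeSet ∪ {s(Q.first, a), s(Q.first, b), s(Q.last, c), s(Q.last, d)})
      (famEdges G P)) ∨
  (∃ i j a b c d, IsCompleteLadder G P i j a b c d)

end FamilyDefs

section Invariants

variable {V : Type*}

/-- The invariant `ν(G)`: the maximal total number of edges of a family of
vertex-disjoint induced paths of `G` which is DOIP. -/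
noncomputable def nu (G : SimpleGraph V) : ℕ :=
  sSup {n : ℕ | ∃ (ℓ : ℕ) (P : Fin ℓ → InducedPath G),
    PairwiseVertexDisjoint G P ∧ FamilyDOIP G P ∧ n = ∑ i, (P i).walk.length}

/-- `ℓ(G)`: the number of edges of a longest induced path of `G`. -/
noncomputable def longestInducedPathLength (G : SimpleGraph V) : ℕ :=
  sSup {n : ℕ | ∃ P : InducedPath G, n = P.walk.length}

end Invariants

section BlockGraphs

variable {V : Type*} {G : SimpleGraph V}

/-- A subgraph is biconnected if it is connected and remains connected after
deleting any single vertex. -/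
def SubgraphBiconnected (H : G.Subgraph) : Prop :=
  H.coe.Connected ∧ ∀ v : V, ((H.deleteVerts {v}).coe).Connected

/-- A block of `G` is a maximal biconnected subgraph. -/
def IsBlock (H : G.Subgraph) : Prop :=
  SubgraphBiconnected H ∧ ∀ H' : G.Subgraph, SubgraphBiconnected H' → H ≤ H' → H' = H

/-- `G` is a block graph if every block of `G` is a complete graph. -/
def IsBlockGraph (G : SimpleGraph V) : Prop :=
  ∀ H : G.Subgraph, IsBlock H → ∀ a ∈ H.verts, ∀ b ∈ H.verts, a ≠ b → H.Adj a b

/-- The intersection `Q ∩ R` of two induced paths, as a subgraph of `G`. -/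
def pathsInter (Q R : InducedPath G) : G.Subgraph where
  verts := Q.vertexSet ∩ R.vertexSet
  Adj a b := G.Adj a b ∧ s(a, b) ∈ Q.walk.edges ∧ s(a, b) ∈ R.walk.edges
  adj_sub h := h.1
  edge_vert h := ⟨Q.walk.fst_mem_support_of_mem_edges h.2.1,
    R.walk.fst_mem_support_of_mem_edges h.2.2⟩
  symm := by
    constructor
    intro a b h
    refine ⟨h.1.symm, ?_, ?_⟩
    · rw [Sym2.eq_swap]; exact h.2.1
    · rw [Sym2.eq_swap]; exact h.2.2

/-- `s` is a maximal clique of `G`. -/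
def IsMaxClique (G : SimpleGraph V) (s : Set V) : Prop :=
  G.IsClique s ∧ ∀ t : Set V, G.IsClique t → s ⊆ t → s = t

/-- `G` has the two-block property: every vertex belongs to at most two maximal
cliques. -/
def TwoBlockProperty (G : SimpleGraph V) : Prop :=
  ∀ v : V, ({s : Set V | IsMaxClique G s ∧ v ∈ s}).ncard ≤ 2

/-- The completion `G_c` of `G` at the vertex `c`. -/
def completionAt (G : SimpleGraph V) (c : V) : SimpleGraph V where
  Adj u w := G.Adj u w ∨ (u ≠ w ∧ G.Adj c u ∧ G.Adj c w)
  symm := by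
    constructor
    intro u w h
    rcases h with h | ⟨hne, h1, h2⟩
    · exact Or.inl h.symm
    · exact Or.inr ⟨hne.symm, h2, h1⟩
  loopless := by
    constructor
    intro u h
    rcases h with h | ⟨hne, _, _⟩
    · exact G.irrefl h
    · exact hne rfl

/-- The number of connected components of a graph. -/
noncomputable def numComponents (G : SimpleGraph V) : ℕ :=
  Nat.card G.ConnectedComponent

/-- `c` is a cut vertex of `G`: deleting it strictly increases the number of
connected components. -/
def IsCutVertex (G : SimpleGraph V) (c : V) : Prop :=
  numComponents G < numComponents (G.induce ({c}ᶜ : Set V))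

end BlockGraphs

set_option linter.unusedSectionVars false


open SimpleGraph Walk

section AuxWalk
variable {V : Type*} {G : SimpleGraph V}

lemma aux_walk_split_first {S : Set V} {a b : V} (w : G.Walk a b)
    (h : ∃ x ∈ w.support, x ∈ S) :
    ∃ u, u ∈ S ∧ ∃ (w₁ : G.Walk a u) (w₂ : G.Walk u b),
      w = w₁.append w₂ ∧ ∀ x ∈ w₁.support, x ∈ S → x = u := by
  induction w with
  | nil =>
      obtain ⟨x, hx, hxS⟩ := h
      rw [support_nil, List.mem_singleton] at hx
      subst hx
      exact ⟨x, hxS, Walk.nil, Walk.nil, rfl, fun y hy _ => by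
        rw [support_nil, List.mem_singleton] at hy; exact hy⟩
  | cons hadj p ih =>
      rename_i a c b
      by_cases haS : a ∈ S
      · refine ⟨a, haS, Walk.nil, Walk.cons hadj p, rfl, fun y hy _ => by
          rw [support_nil, List.mem_singleton] at hy; exact hy⟩
      · obtain ⟨x, hx, hxS⟩ := h
        rw [support_cons, List.mem_cons] at hx
        have hx' : x ∈ p.support := by
          rcases hx with rfl | hx
          · exact absurd hxS haS
          · exact hx
        obtain ⟨u, huS, w₁, w₂, heq, hprop⟩ := ih ⟨x, hx', hxS⟩
        refine ⟨u, huS, Walk.cons hadj w₁, w₂, by rw [cons_append, heq], fun y hy hyS => ?_⟩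
        rw [support_cons, List.mem_cons] at hy
        rcases hy with rfl | hy
        · exact absurd hyS haS
        · exact hprop y hy hyS

lemma aux_walk_split_last {S : Set V} {a b : V} (w : G.Walk a b)
    (h : ∃ x ∈ w.support, x ∈ S) :
    ∃ u, u ∈ S ∧ ∃ (w₁ : G.Walk a u) (w₂ : G.Walk u b),
      w = w₁.append w₂ ∧ ∀ x ∈ w₂.support, x ∈ S → x = u := by
  obtain ⟨x, hx, hxS⟩ := h
  obtain ⟨u, huS, r₁, r₂, heq, hprop⟩ := aux_walk_split_first (S := S) w.reverse
    ⟨x, by rwa [support_reverse, List.mem_reverse], hxS⟩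
  refine ⟨u, huS, r₂.reverse, r₁.reverse, ?_, fun y hy hyS => ?_⟩
  · have h2 := congrArg Walk.reverse heq
    rw [reverse_reverse, reverse_append] at h2
    exact h2
  · exact hprop y (by rwa [support_reverse, List.mem_reverse] at hy) hyS

lemma aux_path_parts {a u b : V} {w₁ : G.Walk a u} {w₂ : G.Walk u b}
    (h : (w₁.append w₂).IsPath) :
    w₁.IsPath ∧ w₂.IsPath ∧ ∀ x ∈ w₁.support, x ∈ w₂.support → x = u := by
  refine ⟨h.of_append_left, h.of_append_right, fun x hx1 hx2 => ?_⟩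
  have hnd := h.support_nodup
  rw [support_append, List.nodup_append] at hnd
  rw [support_eq_cons w₂, List.mem_cons] at hx2
  rcases hx2 with rfl | hx2
  · rfl
  · exact absurd rfl (hnd.2.2 x hx1 x hx2)

lemma aux_loop_nil {u : V} {p : G.Walk u u} (hp : p.IsPath) : p = Walk.nil := by
  cases p with
  | nil => rfl
  | cons hadj q =>
      rw [cons_isPath_iff] at hp
      exact absurd q.end_mem_support hp.2

lemma aux_support_pair {a b : V} {p : G.Walk a b} (hp : p.IsPath)
    (he : s(a, b) ∈ p.edges) : p.support = [a, b] := by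
  cases p with
  | nil => simp at he
  | cons hadj q =>
      rw [edges_cons, List.mem_cons] at he
      rcases he with he | he
      · rw [Sym2.eq_iff] at he
        rcases he with ⟨-, rfl⟩ | ⟨rfl, rfl⟩
        · have : q = Walk.nil := aux_loop_nil hp.of_cons
          subst this
          simp
        · exact absurd hadj G.irrefl
      · rw [cons_isPath_iff] at hp
        exact absurd (q.fst_mem_support_of_mem_edges he) hp.2

lemma aux_length_pos {a b c : V} {p : G.Walk a b} (hc : c ∈ p.support) (hne : c ≠ a) :
    0 < p.length := by
  cases p with
  | nil =>
      rw [support_nil, List.mem_singleton] at hc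
      exact absurd hc hne
  | cons hadj q => simp [length_cons]

end AuxWalk

section AuxIP
open SimpleGraph Walk
variable {V : Type*} {G : SimpleGraph V}

lemma mem_vertexSet_iff {P : InducedPath G} {x : V} :
    x ∈ P.vertexSet ↔ x ∈ P.walk.support := Iff.rfl

lemma mem_edgeSet_iff {P : InducedPath G} {e : Sym2 V} :
    e ∈ P.edgeSet ↔ e ∈ P.walk.edges := Iff.rfl

/-- The left part of a decomposed induced path. -/
def leftPart (P : InducedPath G) {u : V} (w₁ : G.Walk P.first u) (w₂ : G.Walk u P.last)
    (heq : P.walk = w₁.append w₂) : InducedPath G where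
  first := P.first
  last := u
  walk := w₁
  isPath := (heq ▸ P.isPath).of_append_left
  induced := by
    intro x hx y hy hxy
    have hparts := aux_path_parts (heq ▸ P.isPath)
    have hmem : s(x, y) ∈ P.walk.edges :=
      P.induced x (by rw [heq, mem_support_append_iff]; exact Or.inl hx)
        y (by rw [heq, mem_support_append_iff]; exact Or.inl hy) hxy
    rw [heq, edges_append, List.mem_append] at hmem
    rcases hmem with hmem | hmem
    · exact hmem
    · have hx2 : x = u := hparts.2.2 x hx (w₂.fst_mem_support_of_mem_edges hmem)
      have hy2 : y = u := hparts.2.2 y hy (w₂.snd_mem_support_of_mem_edges hmem)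
      exact absurd (hx2.trans hy2.symm) hxy.ne

/-- The right part of a decomposed induced path. -/
def rightPart (P : InducedPath G) {u : V} (w₁ : G.Walk P.first u) (w₂ : G.Walk u P.last)
    (heq : P.walk = w₁.append w₂) : InducedPath G where
  first := u
  last := P.last
  walk := w₂
  isPath := (heq ▸ P.isPath).of_append_right
  induced := by
    intro x hx y hy hxy
    have hparts := aux_path_parts (heq ▸ P.isPath)
    have hmem : s(x, y) ∈ P.walk.edges :=
      P.induced x (by rw [heq, mem_support_append_iff]; exact Or.inr hx)
        y (by rw [heq, mem_support_append_iff]; exact Or.inr hy) hxy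
    rw [heq, edges_append, List.mem_append] at hmem
    rcases hmem with hmem | hmem
    · have hx2 : x = u := hparts.2.2 x (w₁.fst_mem_support_of_mem_edges hmem) hx
      have hy2 : y = u := hparts.2.2 y (w₁.snd_mem_support_of_mem_edges hmem) hy
      exact absurd (hx2.trans hy2.symm) hxy.ne
    · exact hmem

/-- Reversal of an induced path. -/
def revIP (P : InducedPath G) : InducedPath G where
  first := P.last
  last := P.first
  walk := P.walk.reverse
  isPath := P.isPath.reverse
  induced := by
    intro x hx y hy hxy
    rw [edges_reverse, List.mem_reverse]
    exact P.induced x (by rwa [support_reverse, List.mem_reverse] at hx)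
      y (by rwa [support_reverse, List.mem_reverse] at hy) hxy

lemma revIP_vertexSet (P : InducedPath G) : (revIP P).vertexSet = P.vertexSet := by
  ext x
  simp only [mem_vertexSet_iff, revIP, support_reverse, List.mem_reverse]

lemma pathContains_of_subset {Q P' : InducedPath G}
    (hV : P'.vertexSet ⊆ Q.vertexSet) : PathContains G Q P' := by
  refine ⟨hV, fun e he => ?_⟩
  induction e with
  | h x y =>
      rw [mem_edgeSet_iff] at he
      have hadj : G.Adj x y := P'.walk.adj_of_mem_edges he
      exact Q.induced x (hV (P'.walk.fst_mem_support_of_mem_edges he))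
        y (hV (P'.walk.snd_mem_support_of_mem_edges he)) hadj

lemma noContains_mono {ℓ : ℕ} {P : Fin ℓ → InducedPath G} {Q Q' : InducedPath G}
    (hsub : Q'.vertexSet ⊆ Q.vertexSet) (h : ∀ k, ¬ PathContains G Q (P k)) :
    ∀ k, ¬ PathContains G Q' (P k) :=
  fun k hc => h k (pathContains_of_subset (hc.1.trans hsub))

lemma mem_famEdges_iff {ℓ : ℕ} {P : Fin ℓ → InducedPath G} {e : Sym2 V} :
    e ∈ famEdges G P ↔ ∃ k, e ∈ (P k).edgeSet := Set.mem_iUnion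

lemma cross_edge_not_mem {ℓ : ℕ} {P : Fin ℓ → InducedPath G}
    (hdisj : PairwiseVertexDisjoint G P)
    {j : Fin ℓ} {x b : V} (hx : x ∉ (P j).vertexSet) (hb : b ∈ (P j).vertexSet) :
    s(x, b) ∉ famEdges G P := by
  intro hmem
  rw [mem_famEdges_iff] at hmem
  obtain ⟨m, hm⟩ := hmem
  rw [mem_edgeSet_iff] at hm
  have hxm : x ∈ (P m).vertexSet := (P m).walk.fst_mem_support_of_mem_edges hm
  have hbm : b ∈ (P m).vertexSet := (P m).walk.snd_mem_support_of_mem_edges hm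
  by_cases hmj : m = j
  · subst hmj; exact hx hxm
  · exact Set.disjoint_left.mp (hdisj m j hmj) hbm hb

end AuxIP

section AuxBlock
open SimpleGraph Walk
variable {V : Type*} {G : SimpleGraph V}

lemma aux_subgraph_finite [Finite V] : Finite (G.Subgraph) :=
  Finite.of_injective (fun H => (H.verts, H.Adj)) (by
    intro H₁ H₂ h
    rw [Prod.mk.injEq] at h
    exact Subgraph.ext h.1 h.2)

lemma aux_cycle_del_start [DecidableEq V] {v : V} (C : G.Walk v v) (hC : C.IsCycle) :
    ((C.toSubgraph.deleteVerts {v}).coe).Connected := by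
  cases C with
  | nil => exact absurd rfl hC.ne_nil
  | cons hadj p =>
      rename_i x
      have hp : p.IsPath := ((Walk.cons_isCycle_iff p hadj).mp hC).1
      have hpr : p.reverse.IsPath := hp.reverse
      cases hq : p.reverse with
      | nil =>
          exfalso
          have hpn : p = Walk.nil := by
            have h2 := congrArg Walk.reverse hq
            rwa [reverse_reverse] at h2
          subst hpn
          exact G.irrefl hadj
      | cons hadj' q =>
          rename_i y
          rw [hq, cons_isPath_iff] at hpr
          have hqpath : q.IsPath := hpr.1
          have hvq : v ∉ q.support := hpr.2
          have hmemp : ∀ z, z ∈ p.support ↔ (z = v ∨ z ∈ q.support) := by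
            intro z
            rw [← List.mem_reverse, ← support_reverse, hq, support_cons, List.mem_cons]
          have hedge : ∀ e, e ∈ q.edges → e ∈ p.edges := by
            intro e he
            rw [← List.mem_reverse, ← edges_reverse, hq, edges_cons]
            exact List.mem_cons_of_mem _ he
          have hle : q.toSubgraph ≤ (Walk.cons hadj p).toSubgraph.deleteVerts {v} := by
            constructor
            · intro z hz
              rw [mem_verts_toSubgraph] at hz
              refine ⟨?_, ?_⟩
              · rw [mem_verts_toSubgraph, support_cons, List.mem_cons]
                exact Or.inr ((hmemp z).mpr (Or.inr hz))
              · intro hzz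
                rw [Set.mem_singleton_iff] at hzz
                subst hzz
                exact hvq hz
            · intro z w hzw
              have hzs : z ∈ q.support := by
                have h3 := hzw.fst_mem
                rwa [mem_verts_toSubgraph] at h3
              have hws : w ∈ q.support := by
                have h3 := hzw.snd_mem
                rwa [mem_verts_toSubgraph] at h3
              have hedgezw : s(z, w) ∈ p.edges := by
                apply hedge
                exact (Walk.mem_edges_toSubgraph q).mp (Subgraph.mem_edgeSet.mpr hzw)
              refine Subgraph.deleteVerts_adj.mpr ⟨?_, ?_, ?_, ?_, ?_⟩
              · rw [mem_verts_toSubgraph, support_cons, List.mem_cons]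
                exact Or.inr (p.fst_mem_support_of_mem_edges hedgezw)
              · simp only [Set.mem_singleton_iff]
                intro hzz; subst hzz; exact hvq hzs
              · rw [mem_verts_toSubgraph, support_cons, List.mem_cons]
                exact Or.inr (p.snd_mem_support_of_mem_edges hedgezw)
              · simp only [Set.mem_singleton_iff]
                intro hzz; subst hzz; exact hvq hws
              · rw [← Subgraph.mem_edgeSet, Walk.mem_edges_toSubgraph, edges_cons]
                exact List.mem_cons_of_mem _ hedgezw
          have hverts : q.toSubgraph.verts =
              ((Walk.cons hadj p).toSubgraph.deleteVerts {v}).verts := by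
            rw [Subgraph.deleteVerts_verts]
            ext z
            rw [mem_verts_toSubgraph]
            constructor
            · intro hz
              refine ⟨?_, ?_⟩
              · rw [mem_verts_toSubgraph, support_cons, List.mem_cons]
                exact Or.inr ((hmemp z).mpr (Or.inr hz))
              · rw [Set.mem_singleton_iff]; intro hzz; subst hzz; exact hvq hz
            · rintro ⟨hz, hzv⟩
              rw [Set.mem_singleton_iff] at hzv
              rw [mem_verts_toSubgraph, support_cons, List.mem_cons] at hz
              rcases hz with rfl | hz
              · exact absurd rfl hzv
              · rcases (hmemp z).mp hz with rfl | hz2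
                · exact absurd rfl hzv
                · exact hz2
          exact (q.toSubgraph_connected.mono hle hverts).coe

lemma aux_cycle_biconnected [DecidableEq V] {v : V} (C : G.Walk v v) (hC : C.IsCycle) :
    SubgraphBiconnected C.toSubgraph := by
  refine ⟨C.toSubgraph_connected.coe, fun v₀ => ?_⟩
  by_cases hv₀ : v₀ ∈ C.support
  · have hT := C.toSubgraph_rotate hv₀
    rw [← hT]
    exact aux_cycle_del_start (C.rotate v₀ hv₀) (hC.rotate hv₀)
  · have heq : C.toSubgraph.deleteVerts {v₀} = C.toSubgraph := by
      have hv₀' : v₀ ∉ C.toSubgraph.verts := by rwa [mem_verts_toSubgraph]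
      apply Subgraph.ext
      · rw [Subgraph.deleteVerts_verts]
        exact Set.diff_singleton_eq_self hv₀'
      · ext z w
        rw [Subgraph.deleteVerts_adj]
        constructor
        · rintro ⟨-, -, -, -, h⟩; exact h
        · intro h
          refine ⟨h.fst_mem, ?_, h.snd_mem, ?_, h⟩
          · rw [Set.mem_singleton_iff]; rintro rfl; exact hv₀' h.fst_mem
          · rw [Set.mem_singleton_iff]; rintro rfl; exact hv₀' h.snd_mem
    rw [heq]
    exact C.toSubgraph_connected.coe

lemma aux_adj_of_biconnected [Finite V] (hBG : IsBlockGraph G) {H : G.Subgraph}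
    (hH : SubgraphBiconnected H) {a b : V} (ha : a ∈ H.verts) (hb : b ∈ H.verts)
    (hne : a ≠ b) : G.Adj a b := by
  have : Finite (G.Subgraph) := aux_subgraph_finite
  set s : Set (G.Subgraph) := {H' | SubgraphBiconnected H' ∧ H ≤ H'} with hs
  obtain ⟨M, hM, hmax⟩ := Set.Finite.exists_maximalFor id s (Set.toFinite s)
    ⟨H, hH, le_refl H⟩
  have hblk : IsBlock M :=
    ⟨hM.1, fun H' hH' hle => le_antisymm (hmax ⟨hH', hM.2.trans hle⟩ hle) hle⟩
  exact M.adj_sub (hBG M hblk a (Subgraph.verts_mono hM.2 ha) b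
    (Subgraph.verts_mono hM.2 hb) hne)

lemma aux_cycle_clique [Finite V] [DecidableEq V] (hBG : IsBlockGraph G) {v : V}
    {C : G.Walk v v} (hC : C.IsCycle) {a b : V} (ha : a ∈ C.support)
    (hb : b ∈ C.support) (hne : a ≠ b) : G.Adj a b :=
  aux_adj_of_biconnected hBG (aux_cycle_biconnected C hC)
    ((C.mem_verts_toSubgraph).mpr ha) ((C.mem_verts_toSubgraph).mpr hb) hne

lemma aux_no_two_paths [Finite V] [DecidableEq V] (hBG : IsBlockGraph G) {w w' : V}
    (hne : w ≠ w') (hnadj : ¬ G.Adj w w') {N M : G.Walk w w'}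
    (hN : N.IsPath) (hM : M.IsPath)
    (hint : ∀ x, x ∈ N.support → x ∈ M.support → x = w ∨ x = w') : False := by
  have hedisj : ∀ e, e ∈ N.edges → e ∈ M.edges → False := by
    intro e he1 he2
    induction e with
    | h x y =>
        have hadj : G.Adj x y := N.adj_of_mem_edges he1
        have hx := hint x (N.fst_mem_support_of_mem_edges he1)
          (M.fst_mem_support_of_mem_edges he2)
        have hy := hint y (N.snd_mem_support_of_mem_edges he1)
          (M.snd_mem_support_of_mem_edges he2)
        rcases hx with rfl | rfl <;> rcases hy with rfl | rfl
        · exact hadj.ne rfl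
        · exact hnadj hadj
        · exact hnadj hadj.symm
        · exact hadj.ne rfl
  have hCyc : (N.append M.reverse).IsCycle := by
    refine ⟨⟨⟨?_⟩, ?_⟩, ?_⟩
    · rw [edges_append, edges_reverse, List.nodup_append]
      refine ⟨hN.edges_nodup, (List.nodup_reverse).mpr hM.edges_nodup, ?_⟩
      intro e he1 e' he2 hee
      subst hee
      exact hedisj e he1 (List.mem_reverse.mp he2)
    · cases N with
      | nil => exact absurd rfl hne
      | cons h q => simp [cons_append]
    · rw [support_append, support_eq_cons N]
      simp only [List.cons_append, List.tail_cons]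
      rw [List.nodup_append]
      refine ⟨?_, ?_, ?_⟩
      · exact List.Sublist.nodup (List.tail_sublist N.support) hN.support_nodup
      · exact List.Sublist.nodup (List.tail_sublist M.reverse.support)
          hM.reverse.support_nodup
      · intro z hz1 z' hz2 hzz
        subst hzz
        have hz1' : z ∈ N.support := List.mem_of_mem_tail hz1
        have hz2' : z ∈ M.support := by
          have := List.mem_of_mem_tail hz2
          rwa [support_reverse, List.mem_reverse] at this
        rcases hint z hz1' hz2' with rfl | rfl
        · have hnd := hN.support_nodup
          rw [support_eq_cons N] at hnd
          exact (List.nodup_cons.mp hnd).1 hz1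
        · have hnd := hM.reverse.support_nodup
          rw [support_eq_cons M.reverse] at hnd
          exact (List.nodup_cons.mp hnd).1 hz2
  have hw's : w' ∈ (N.append M.reverse).support := by
    rw [mem_support_append_iff]
    exact Or.inl N.end_mem_support
  exact hnadj (aux_cycle_clique hBG hCyc (N.append M.reverse).start_mem_support hw's hne)

lemma aux_final_contra [Finite V] [DecidableEq V] (hBG : IsBlockGraph G) {w w' : V}
    (hwne : w ≠ w') (hnadj : ¬ G.Adj w w') (Q : InducedPath G)
    (hwT : w ∈ Q.walk.support) (hw'T : w' ∈ Q.walk.support)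
    {M : G.Walk w w'} (hM : M.IsPath)
    (hint : ∀ x, x ∈ M.support → x ∈ Q.walk.support → x = w ∨ x = w') : False := by
  obtain ⟨v₁, hv₁, C₁, C₂, heqC, hC₁⟩ := aux_walk_split_first (S := {w, w'}) Q.walk
    ⟨w, hwT, Or.inl rfl⟩
  have hQpath := Q.isPath
  rw [heqC] at hQpath
  have hparts := aux_path_parts hQpath
  rw [Set.mem_insert_iff, Set.mem_singleton_iff] at hv₁
  rcases hv₁ with rfl | rfl
  · -- v₁ = w
    have hv₂C₂ : w' ∈ C₂.support := by
      have h4 : w' ∈ (C₁.append C₂).support := heqC ▸ hw'T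
      rw [mem_support_append_iff] at h4
      rcases h4 with h | h
      · exact absurd (hC₁ w' h (Or.inr rfl)) hwne.symm
      · exact h
    obtain ⟨v₂', hv₂'S, N, Rem, heqN, -⟩ :=
      aux_walk_split_first (S := {w'}) C₂ ⟨w', hv₂C₂, rfl⟩
    rw [Set.mem_singleton_iff] at hv₂'S
    subst hv₂'S
    have hNpath : N.IsPath := by
      have h2 := hparts.2.1
      rw [heqN] at h2
      exact (aux_path_parts h2).1
    refine aux_no_two_paths hBG hwne hnadj hNpath hM (fun x hx1 hx2 => ?_)
    have hxQ : x ∈ Q.walk.support := by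
      rw [heqC, mem_support_append_iff]
      exact Or.inr (by rw [heqN, mem_support_append_iff]; exact Or.inl hx1)
    exact hint x hx2 hxQ
  · -- v₁ = w'
    have hv₂C₂ : w ∈ C₂.support := by
      have h4 : w ∈ (C₁.append C₂).support := heqC ▸ hwT
      rw [mem_support_append_iff] at h4
      rcases h4 with h | h
      · exact absurd (hC₁ w h (Or.inl rfl)) hwne
      · exact h
    obtain ⟨v₂', hv₂'S, N, Rem, heqN, -⟩ :=
      aux_walk_split_first (S := {w}) C₂ ⟨w, hv₂C₂, rfl⟩
    rw [Set.mem_singleton_iff] at hv₂'S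
    subst hv₂'S
    have hNpath : N.IsPath := by
      have h2 := hparts.2.1
      rw [heqN] at h2
      exact (aux_path_parts h2).1
    refine aux_no_two_paths hBG hwne.symm (fun h => hnadj h.symm) hNpath hM.reverse
      (fun x hx1 hx2 => ?_)
    have hxQ : x ∈ Q.walk.support := by
      rw [heqC, mem_support_append_iff]
      exact Or.inr (by rw [heqN, mem_support_append_iff]; exact Or.inl hx1)
    have hx2' : x ∈ M.support := by rwa [support_reverse, List.mem_reverse] at hx2
    exact (hint x hx2' hxQ).symm

end AuxBlock

section MainRec
open SimpleGraph Walk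
variable {V : Type*} [Fintype V] [DecidableEq V] {G : SimpleGraph V} {ℓ : ℕ}

def AnyStruct (G : SimpleGraph V) (P : Fin ℓ → InducedPath G) (Q : InducedPath G) : Prop :=
  (∃ i j, IsInternalStrand G P i j Q) ∨
  (∃ i j b c, IsInternalFork G P i j Q b c) ∨
  (∃ i j a b c d, IsDoubleFork G P i j Q a b c d)

def Concl (G : SimpleGraph V) (P : Fin ℓ → InducedPath G) : Prop :=
  (∃ i j Q, IsInternalStrand G P i j Q ∧ Disjoint Q.edgeSet (famEdges G P)) ∨
  (∃ i j Q b c, IsInternalFork G P i j Q b c ∧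
    Disjoint (Q.edgeSet ∪ {s(Q.last, b), s(Q.last, c)}) (famEdges G P)) ∨
  (∃ i j Q a b c d, IsDoubleFork G P i j Q a b c d ∧
    Disjoint (Q.edgeSet ∪ {s(Q.first, a), s(Q.first, b), s(Q.last, c), s(Q.last, d)})
      (famEdges G P))

lemma aux_ne_of_inter {Q : InducedPath G} {x y : V} {T' : Set V} {w0 : V}
    (hxy : x ≠ y) (hxQ : x ∈ Q.vertexSet) (hyQ : y ∈ Q.vertexSet)
    (hx : x ∈ T') (hy : y ∈ T') (hsing : Q.vertexSet ∩ T' = {w0}) : False := by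
  have h1 : x ∈ ({w0} : Set V) := hsing ▸ (Set.mem_inter hxQ hx)
  have h2 : y ∈ ({w0} : Set V) := hsing ▸ (Set.mem_inter hyQ hy)
  rw [Set.mem_singleton_iff] at h1 h2
  exact hxy (h1.trans h2.symm)

lemma aux_ne_of_empty {Q : InducedPath G} {x : V} {T' : Set V}
    (hxQ : x ∈ Q.vertexSet) (hx : x ∈ T') (hempty : Q.vertexSet ∩ T' = ∅) : False := by
  have h1 : x ∈ (∅ : Set V) := hempty ▸ (Set.mem_inter hxQ hx)
  exact (Set.mem_empty_iff_false x).mp h1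

lemma aux_inter_eq {Q' : InducedPath G} {S' : Set V} {u : V}
    (hu1 : u ∈ Q'.vertexSet) (hu2 : u ∈ S')
    (hall : ∀ x ∈ Q'.walk.support, x ∈ S' → x = u) : Q'.vertexSet ∩ S' = {u} := by
  apply Set.Subset.antisymm
  · rintro z ⟨hz1, hz2⟩
    exact Set.mem_singleton_iff.mpr (hall z hz1 hz2)
  · intro z hz
    rw [Set.mem_singleton_iff] at hz
    subst hz
    exact ⟨hu1, hu2⟩

lemma aux_shrink_inter {Q Q' : InducedPath G} {T' : Set V} {v0 : V}
    (hsub : Q'.vertexSet ⊆ Q.vertexSet) (hv0 : v0 ∈ Q'.vertexSet)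
    (hQ : Q.vertexSet ∩ T' = {v0}) : Q'.vertexSet ∩ T' = {v0} := by
  apply Set.Subset.antisymm
  · intro z hz
    rw [← hQ]
    exact ⟨hsub hz.1, hz.2⟩
  · intro z hz
    rw [Set.mem_singleton_iff] at hz
    have h1 : v0 ∈ Q.vertexSet ∩ T' := by rw [hQ]; exact Set.mem_singleton_iff.mpr rfl
    rw [hz]
    exact ⟨hv0, h1.2⟩

lemma aux_shrink_empty {Q Q' : InducedPath G} {T' : Set V}
    (hsub : Q'.vertexSet ⊆ Q.vertexSet) (hQ : Q.vertexSet ∩ T' = ∅) :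
    Q'.vertexSet ∩ T' = ∅ := by
  apply Set.eq_empty_iff_forall_notMem.mpr
  intro z hz
  exact (Set.eq_empty_iff_forall_notMem.mp hQ z) ⟨hsub hz.1, hz.2⟩

lemma concl_of_disjoint (P : Fin ℓ → InducedPath G) (hdisj : PairwiseVertexDisjoint G P)
    (Q : InducedPath G) (hstruct : AnyStruct G P Q)
    (hdis : Disjoint Q.edgeSet (famEdges G P)) : Concl G P := by
  rcases hstruct with ⟨i, j, hS⟩ | ⟨i, j, b, c, hF⟩ | ⟨i, j, a, b, c, d, hD⟩
  · exact Or.inl ⟨i, j, Q, hS, hdis⟩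
  · obtain ⟨hij, hind, hfi, hQi, hQj, hb, hc, hbc, hadjb, hadjc, hnc⟩ := hF
    refine Or.inr (Or.inl ⟨i, j, Q, b, c,
      ⟨hij, hind, hfi, hQi, hQj, hb, hc, hbc, hadjb, hadjc, hnc⟩, ?_⟩)
    have hlast : Q.last ∉ (P j).vertexSet := fun hmem =>
      aux_ne_of_empty (Q.walk.end_mem_support) hmem hQj
    rw [Set.disjoint_union_left]
    refine ⟨hdis, Set.disjoint_left.mpr ?_⟩
    intro e he
    simp only [Set.mem_insert_iff, Set.mem_singleton_iff] at he
    rcases he with rfl | rfl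
    · exact cross_edge_not_mem hdisj hlast hb
    · exact cross_edge_not_mem hdisj hlast hc
  · obtain ⟨hij, hind, hQi, hQj, ha, hb, hab, hc, hd, hcd, hja, hjb, hjc, hjd, hnc⟩ := hD
    refine Or.inr (Or.inr ⟨i, j, Q, a, b, c, d,
      ⟨hij, hind, hQi, hQj, ha, hb, hab, hc, hd, hcd, hja, hjb, hjc, hjd, hnc⟩, ?_⟩)
    have hfirst : Q.first ∉ (P i).vertexSet := fun hmem =>
      aux_ne_of_empty (Q.walk.start_mem_support) hmem hQi
    have hlast : Q.last ∉ (P j).vertexSet := fun hmem =>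
      aux_ne_of_empty (Q.walk.end_mem_support) hmem hQj
    rw [Set.disjoint_union_left]
    refine ⟨hdis, Set.disjoint_left.mpr ?_⟩
    intro e he
    simp only [Set.mem_insert_iff, Set.mem_singleton_iff] at he
    rcases he with rfl | rfl | rfl | rfl
    · exact cross_edge_not_mem hdisj hfirst ha
    · exact cross_edge_not_mem hdisj hfirst hb
    · exact cross_edge_not_mem hdisj hlast hc
    · exact cross_edge_not_mem hdisj hlast hd

lemma main_rec (hBG : IsBlockGraph G) (P : Fin ℓ → InducedPath G)
    (hdisj : PairwiseVertexDisjoint G P) :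
    ∀ (n : ℕ) (Q : InducedPath G), Q.walk.length ≤ n → AnyStruct G P Q → Concl G P := by
  intro n
  induction n with
  | zero =>
      intro Q hlen hstruct
      apply concl_of_disjoint P hdisj Q hstruct
      rw [Set.disjoint_left]
      intro e he
      exfalso
      rw [mem_edgeSet_iff] at he
      have h1 : Q.walk.edges ≠ [] := List.ne_nil_of_mem he
      have h2 : Q.walk.edges.length = Q.walk.length := Q.walk.length_edges
      have h3 : Q.walk.length = 0 := Nat.le_zero.mp hlen
      exact h1 (List.length_eq_zero_iff.mp (by rw [h2, h3]))
  | succ n ih =>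
      intro Q hlen hstruct
      by_cases hdis : Disjoint Q.edgeSet (famEdges G P)
      · exact concl_of_disjoint P hdisj Q hstruct hdis
      · rw [Set.not_disjoint_iff] at hdis
        obtain ⟨e, heQ, hefam⟩ := hdis
        rw [mem_famEdges_iff] at hefam
        obtain ⟨k, hek⟩ := hefam
        rw [mem_edgeSet_iff] at heQ hek
        have hnoc : ∀ m, ¬ PathContains G Q (P m) := by
          rcases hstruct with ⟨i, j, h⟩ | ⟨i, j, b, c, h⟩ | ⟨i, j, a, b, c, d, h⟩
          · exact h.2.2.2.2.2.2
          · exact h.2.2.2.2.2.2.2.2.2.2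
          · exact h.2.2.2.2.2.2.2.2.2.2.2.2.2.2
        induction e with
        | h x y =>
        have hxy : G.Adj x y := Q.walk.adj_of_mem_edges heQ
        have hxQ : x ∈ Q.walk.support := Q.walk.fst_mem_support_of_mem_edges heQ
        have hyQ : y ∈ Q.walk.support := Q.walk.snd_mem_support_of_mem_edges heQ
        have hxk : x ∈ (P k).walk.support := (P k).walk.fst_mem_support_of_mem_edges hek
        have hyk : y ∈ (P k).walk.support := (P k).walk.snd_mem_support_of_mem_edges hek
        obtain ⟨u, huS, Pre, Rest, heq1, hPre⟩ :=
          aux_walk_split_first (S := (P k).vertexSet) Q.walk ⟨x, hxQ, hxk⟩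
        obtain ⟨u', hu'S, Mid, Suf, heq2, hSuf⟩ :=
          aux_walk_split_last (S := (P k).vertexSet) Rest ⟨u, Rest.start_mem_support, huS⟩
        have hQp : (Pre.append Rest).IsPath := heq1 ▸ Q.isPath
        have hparts1 := aux_path_parts hQp
        have hRp : (Mid.append Suf).IsPath := heq2 ▸ hparts1.2.1
        have hparts2 := aux_path_parts hRp
        have huu' : u ≠ u' := by
          intro h
          subst h
          have hMid : Mid = Walk.nil := aux_loop_nil hparts2.1
          have hall : ∀ z, z ∈ Q.walk.support → z ∈ (P k).vertexSet → z = u := by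
            intro z hz hzS
            rw [heq1, mem_support_append_iff] at hz
            rcases hz with hz | hz
            · exact hPre z hz hzS
            · rw [heq2, mem_support_append_iff] at hz
              rcases hz with hz | hz
              · rw [hMid, support_nil, List.mem_singleton] at hz; exact hz
              · exact hSuf z hz hzS
          exact hxy.ne ((hall x hxQ hxk).trans (hall y hyQ hyk).symm)
        have hlen1 : Q.walk.length = Pre.length + Rest.length := by
          rw [heq1, length_append]
        have hlen2 : Rest.length = Mid.length + Suf.length := by
          rw [heq2, length_append]
        have hu'Rest : u' ∈ Rest.support := by
          rw [heq2, mem_support_append_iff]; exact Or.inr Suf.start_mem_support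
        have hRestpos : 0 < Rest.length := aux_length_pos hu'Rest (Ne.symm huu')
        have hMidpos : Mid.length ≠ 0 := fun h0 => huu' (Walk.eq_of_length_eq_zero h0)
        have hu_mem_Q : u ∈ Q.walk.support := by
          rw [heq1, mem_support_append_iff]; exact Or.inl Pre.end_mem_support
        have hu'_mem_Q : u' ∈ Q.walk.support := by
          rw [heq1, mem_support_append_iff]; exact Or.inr hu'Rest
        by_cases hu_int : u ∈ (P k).interior
        · -- shorten to the prefix
          set QL := leftPart Q Pre Rest heq1 with hQLdef
          have hQLv : QL.vertexSet ⊆ Q.vertexSet := by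
            intro z hz
            rw [mem_vertexSet_iff] at hz ⊢
            rw [heq1, mem_support_append_iff]
            exact Or.inl hz
          have hQLS : QL.vertexSet ∩ (P k).vertexSet = {u} :=
            aux_inter_eq Pre.end_mem_support huS hPre
          have hQLlen : QL.walk.length ≤ n := by
            have : QL.walk.length = Pre.length := rfl
            omega
          have hQLnc : ∀ m, ¬ PathContains G QL (P m) := noContains_mono hQLv hnoc
          rcases hstruct with ⟨i, j, hS⟩ | ⟨i, j, b, c, hF⟩ | ⟨i, j, a, b, c, d, hD⟩
          · obtain ⟨hij, hind, hfi, hlj, hQi, hQj, hnc⟩ := hS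
            have hki : k ≠ i := by
              rintro rfl
              exact aux_ne_of_inter hxy.ne (mem_vertexSet_iff.mpr hxQ) (mem_vertexSet_iff.mpr hyQ) (mem_vertexSet_iff.mpr hxk) (mem_vertexSet_iff.mpr hyk) hQi
            refine ih QL hQLlen (Or.inl ⟨i, k, ?_⟩)
            exact ⟨Ne.symm hki, hQLv.trans hind, hfi,
              hu_int, aux_shrink_inter hQLv Pre.start_mem_support hQi, hQLS, hQLnc⟩
          · obtain ⟨hij, hind, hfi, hQi, hQj, hb, hc, hbc, hadjb, hadjc, hnc⟩ := hF
            have hki : k ≠ i := by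
              rintro rfl
              exact aux_ne_of_inter hxy.ne (mem_vertexSet_iff.mpr hxQ) (mem_vertexSet_iff.mpr hyQ) (mem_vertexSet_iff.mpr hxk) (mem_vertexSet_iff.mpr hyk) hQi
            refine ih QL hQLlen (Or.inl ⟨i, k, ?_⟩)
            exact ⟨Ne.symm hki, hQLv.trans hind, hfi,
              hu_int, aux_shrink_inter hQLv Pre.start_mem_support hQi, hQLS, hQLnc⟩
          · obtain ⟨hij, hind, hQi, hQj, ha, hb, hab, hc, hd, hcd, hja, hjb, hjc, hjd, hnc⟩ := hD
            have hki : k ≠ i := by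
              rintro rfl
              exact aux_ne_of_empty (mem_vertexSet_iff.mpr hxQ) (mem_vertexSet_iff.mpr hxk) hQi
            set QLr := revIP QL with hQLrdef
            have hQLrv : QLr.vertexSet ⊆ Q.vertexSet := by
              rw [hQLrdef, revIP_vertexSet]; exact hQLv
            have hQLrlen : QLr.walk.length ≤ n := by
              have h5 : QLr.walk.length = Pre.reverse.length := rfl
              rw [length_reverse] at h5
              omega
            refine ih QLr hQLrlen (Or.inr (Or.inl ⟨k, i, a, b, ?_⟩))
            refine ⟨hki, hQLrv.trans hind, hu_int, ?_, ?_, ha, hb, hab, ?_, ?_, ?_⟩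
            · rw [hQLrdef, revIP_vertexSet]
              exact hQLS
            · rw [hQLrdef, revIP_vertexSet]
              exact aux_shrink_empty hQLv hQi
            · exact hja
            · exact hjb
            · exact noContains_mono hQLrv hnoc
        · by_cases hu'_int : u' ∈ (P k).interior
          · -- shorten to the suffix
            have heq3 : Q.walk = (Pre.append Mid).append Suf := by
              rw [heq1, heq2, append_assoc]
            set QR := rightPart Q (Pre.append Mid) Suf heq3 with hQRdef
            have hQRv : QR.vertexSet ⊆ Q.vertexSet := by
              intro z hz
              rw [mem_vertexSet_iff] at hz ⊢
              rw [heq3, mem_support_append_iff]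
              exact Or.inr hz
            have hQRS : QR.vertexSet ∩ (P k).vertexSet = {u'} :=
              aux_inter_eq Suf.start_mem_support hu'S hSuf
            have hQRlen : QR.walk.length ≤ n := by
              have : QR.walk.length = Suf.length := rfl
              omega
            have hQRnc : ∀ m, ¬ PathContains G QR (P m) := noContains_mono hQRv hnoc
            rcases hstruct with ⟨i, j, hS⟩ | ⟨i, j, b, c, hF⟩ | ⟨i, j, a, b, c, d, hD⟩
            · obtain ⟨hij, hind, hfi, hlj, hQi, hQj, hnc⟩ := hS
              have hkj : k ≠ j := by
                rintro rfl
                exact aux_ne_of_inter hxy.ne (mem_vertexSet_iff.mpr hxQ) (mem_vertexSet_iff.mpr hyQ) (mem_vertexSet_iff.mpr hxk) (mem_vertexSet_iff.mpr hyk) hQj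
              refine ih QR hQRlen (Or.inl ⟨k, j, ?_⟩)
              exact ⟨hkj, hQRv.trans hind, hu'_int, hlj, hQRS,
                aux_shrink_inter hQRv Suf.end_mem_support hQj, hQRnc⟩
            · obtain ⟨hij, hind, hfi, hQi, hQj, hb, hc, hbc, hadjb, hadjc, hnc⟩ := hF
              have hkj : k ≠ j := by
                rintro rfl
                exact aux_ne_of_empty (mem_vertexSet_iff.mpr hxQ) (mem_vertexSet_iff.mpr hxk) hQj
              refine ih QR hQRlen (Or.inr (Or.inl ⟨k, j, b, c, ?_⟩))
              exact ⟨hkj, hQRv.trans hind, hu'_int, hQRS,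
                aux_shrink_empty hQRv hQj, hb, hc, hbc, hadjb, hadjc, hQRnc⟩
            · obtain ⟨hij, hind, hQi, hQj, ha, hb, hab, hc, hd, hcd, hja, hjb, hjc, hjd, hnc⟩ := hD
              have hkj : k ≠ j := by
                rintro rfl
                exact aux_ne_of_empty (mem_vertexSet_iff.mpr hxQ) (mem_vertexSet_iff.mpr hxk) hQj
              refine ih QR hQRlen (Or.inr (Or.inl ⟨k, j, c, d, ?_⟩))
              exact ⟨hkj, hQRv.trans hind, hu'_int, hQRS,
                aux_shrink_empty hQRv hQj, hc, hd, hcd, hjc, hjd, hQRnc⟩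
          · -- both ends of `P k` lie on `Q`: contradiction with the block graph property
            exfalso
            have hub : u ∈ (P k).boundary := by
              by_contra h
              exact hu_int ⟨huS, h⟩
            have hu'b : u' ∈ (P k).boundary := by
              by_contra h
              exact hu'_int ⟨hu'S, h⟩
            rw [InducedPath.boundary, Set.mem_insert_iff, Set.mem_singleton_iff] at hub hu'b
            have hflT : (P k).first ∈ Q.walk.support ∧ (P k).last ∈ Q.walk.support := by
              rcases hub with hu1 | hu1 <;> rcases hu'b with hu2 | hu2
              · exact absurd (hu1.trans hu2.symm) huu'
              · exact ⟨hu1 ▸ hu_mem_Q, hu2 ▸ hu'_mem_Q⟩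
              · exact ⟨hu2 ▸ hu'_mem_Q, hu1 ▸ hu_mem_Q⟩
              · exact absurd (hu1.trans hu2.symm) huu'
            by_cases hRT : (P k).vertexSet ⊆ Q.vertexSet
            · exact (hnoc k) (pathContains_of_subset hRT)
            · rw [Set.not_subset] at hRT
              obtain ⟨z, hzR, hzT⟩ := hRT
              obtain ⟨z', hz'S, A, B, heqR, -⟩ :=
                aux_walk_split_first (S := {z}) (P k).walk ⟨z, hzR, rfl⟩
              rw [Set.mem_singleton_iff] at hz'S
              have hz'T : z' ∉ Q.vertexSet := by rw [hz'S]; exact hzT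
              obtain ⟨w, hwT, A₁, A₂, heqA, hA₂⟩ :=
                aux_walk_split_last (S := Q.vertexSet) A
                  ⟨(P k).first, A.start_mem_support, hflT.1⟩
              obtain ⟨w', hw'T, B₁, B₂, heqB, hB₁⟩ :=
                aux_walk_split_first (S := Q.vertexSet) B
                  ⟨(P k).last, B.end_mem_support, hflT.2⟩
              have heqR1 : (P k).walk = A₁.append (A₂.append (B₁.append B₂)) := by
                rw [heqR, heqA, heqB]
                exact (append_assoc _ _ _).symm
              set Rk' := rightPart (P k) A₁ (A₂.append (B₁.append B₂)) heqR1 with hRk'def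
              have heqR2 : Rk'.walk = (A₂.append B₁).append B₂ := append_assoc _ _ _
              set MIP := leftPart Rk' (A₂.append B₁) B₂ heqR2 with hMIPdef
              have hMp : (A₂.append B₁).IsPath := MIP.isPath
              have hzM : z' ∈ (A₂.append B₁).support := by
                rw [mem_support_append_iff]
                exact Or.inl A₂.end_mem_support
              have hMint : ∀ x', x' ∈ (A₂.append B₁).support → x' ∈ Q.walk.support →
                  x' = w ∨ x' = w' := by
                intro x' hx' hx'T
                rw [mem_support_append_iff] at hx'
                rcases hx' with h | h
                · exact Or.inl (hA₂ x' h hx'T)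
                · exact Or.inr (hB₁ x' h hx'T)
              have hwne : w ≠ w' := by
                intro h
                subst h
                have hnil : A₂.append B₁ = Walk.nil := aux_loop_nil hMp
                rw [hnil, support_nil, List.mem_singleton] at hzM
                exact hz'T (hzM ▸ (mem_vertexSet_iff.mpr (mem_vertexSet_iff.mp hwT)))
              have hnadj : ¬ G.Adj w w' := by
                intro hadj
                have hedge : s(w, w') ∈ MIP.walk.edges :=
                  MIP.induced w MIP.walk.start_mem_support w' MIP.walk.end_mem_support hadj
                have hsup := aux_support_pair MIP.isPath hedge
                have hz2 : z' ∈ ([w, w'] : List V) := hsup ▸ hzM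
                rcases List.mem_pair.mp hz2 with rfl | rfl
                · exact hz'T hwT
                · exact hz'T hw'T
              exact aux_final_contra hBG hwne hnadj Q (mem_vertexSet_iff.mp hwT)
                (mem_vertexSet_iff.mp hw'T) hMp hMint

end MainRec


/-- **Theorem (Statement 17).** If `P_ind` contains an internal fork or a double fork,
then it contains an internal strand, internal fork, or double fork which is
edge-disjoint from the family `P`. -/
theorem blockGraph_fork_edgeDisjoint {V : Type*} [Fintype V] [DecidableEq V]
    (G : SimpleGraph V) (hBG : IsBlockGraph G) (ℓ : ℕ) (P : Fin ℓ → InducedPath G)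
    (hdisj : PairwiseVertexDisjoint G P)
    (h : (∃ i j Q b c, IsInternalFork G P i j Q b c) ∨
      (∃ i j Q a b c d, IsDoubleFork G P i j Q a b c d)) :
    (∃ i j Q, IsInternalStrand G P i j Q ∧ Disjoint Q.edgeSet (famEdges G P)) ∨
    (∃ i j Q b c, IsInternalFork G P i j Q b c ∧
      Disjoint (Q.edgeSet ∪ {s(Q.last, b), s(Q.last, c)}) (famEdges G P)) ∨
    (∃ i j Q a b c d, IsDoubleFork G P i j Q a b c d ∧
      Disjoint (Q.edgeSet ∪ {s(Q.first, a), s(Q.first, b), s(Q.last, c), s(Q.last, d)})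
        (famEdges G P)) := by
  have hstruct : ∃ Q : InducedPath G, AnyStruct G P Q := by
    rcases h with ⟨i, j, Q, b, c, hF⟩ | ⟨i, j, Q, a, b, c, d, hD⟩
    · exact ⟨Q, Or.inr (Or.inl ⟨i, j, b, c, hF⟩)⟩
    · exact ⟨Q, Or.inr (Or.inr ⟨i, j, a, b, c, d, hD⟩)⟩
  obtain ⟨Q, hQ⟩ := hstruct
  exact main_rec hBG P hdisj Q.walk.length Q le_rfl hQ
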